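/- Let G_n be the set of binary words of length n with no two consecutive twos. Then Ψ(ω) = Γ(ω) for every ω ∈ G_n (so Ψ(G_n) = Γ(G_n)), where Ψ and Γ are the inverse Foata map and the extended Steingrímsson map on binary words. -/

import Mathlib

/-- Count the leading letters of a list equal to `a`; return the count and the rest. -/
def leadCount (a : ℕ) : List ℕ → ℕ × List ℕ
  | [] => (0, [])
  | b :: rest =>
    if b = a then
      let p := leadCount a rest
      (p.1 + 1, p.2)
    else (0, b :: rest)

def blocksAux : ℕ → List ℕ → List (ℕ × ℕ)
  | 0, _ => []
  | _, [] => []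
  | fuel + 1, w =>
    let p := leadCount 1 w
    let q := leadCount 2 p.2
    (p.1, q.1) :: blocksAux fuel q.2

/-- The descent-block decomposition `[(m₀,n₀),…,(m_d,n_d)]` of a binary word
`1^{m₀} 2^{n₀} ⋯ 1^{m_d} 2^{n_d}`. -/
def blocks (w : List ℕ) : List (ℕ × ℕ) := blocksAux w.length w

/-- The word `1^{m₀} 2^{n₀} ⋯ 1^{m_d} 2^{n_d}` determined by blocks. -/
def blockWord (bs : List (ℕ × ℕ)) : List ℕ :=
  bs.flatMap fun p => List.replicate p.1 1 ++ List.replicate p.2 2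

/-- `[(m₀,n₀),…,(m_d,n_d)]` is a valid descent-block decomposition:
`m_i > 0` for `1 ≤ i ≤ d` and `n_j > 0` for `0 ≤ j ≤ d-1`. -/
def ValidBlocks (bs : List (ℕ × ℕ)) : Prop :=
  bs ≠ [] ∧ (∀ p ∈ bs.tail, 0 < p.1) ∧ (∀ p ∈ bs.dropLast, 0 < p.2)

/-- A word on the alphabet {1,2}. -/
def IsBinary (w : List ℕ) : Prop := ∀ a ∈ w, a = 1 ∨ a = 2

/-- The descent number of a word. -/
def des (w : List ℕ) : ℕ := (w.zip w.tail).countP fun p => decide (p.2 < p.1)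

/-- The excedance number of a binary word with `k` ones: the number of
positions `i ≤ k` carrying the letter 2. -/
def exc (w : List ℕ) : ℕ := (w.take (w.count 1)).count 2

/-- `Ψ = Φ₁⁻¹` on binary words, via the descent-block decomposition. -/
def psiBlocks (bs : List (ℕ × ℕ)) : List ℕ :=
  List.replicate (bs.headD (0,0)).1 1
    ++ bs.tail.flatMap (fun p => 2 :: List.replicate (p.1 - 1) 1)
    ++ bs.dropLast.flatMap (fun p => List.replicate (p.2 - 1) 2 ++ [1])
    ++ List.replicate (bs.getLastD (0,0)).2 2

def Psi (w : List ℕ) : List ℕ := psiBlocks (blocks w)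

/-- Foata's second fundamental transformation on binary words. -/
def phi2Blocks (bs : List (ℕ × ℕ)) : List ℕ :=
  bs.tail.reverse.flatMap (fun p => List.replicate (p.1 - 1) 1 ++ [2])
    ++ List.replicate (bs.headD (0,0)).1 1
    ++ bs.dropLast.flatMap (fun p => List.replicate (p.2 - 1) 2 ++ [1])
    ++ List.replicate (bs.getLastD (0,0)).2 2

def Phi2 (w : List ℕ) : List ℕ := phi2Blocks (blocks w)

/-- The extended Steingrímsson map `Γ` on binary words. -/
def gammaBlocks (bs : List (ℕ × ℕ)) : List ℕ :=
  match bs with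
  | [] => []
  | [(m0, n0)] => List.replicate m0 1 ++ List.replicate n0 2
  | (m0, n0) :: rest =>
      List.replicate m0 1
        ++ rest.dropLast.flatMap (fun p => 2 :: List.replicate (p.1 - 1) 1)
        ++ (2 :: List.replicate (rest.getLastD (0,0)).1 1)
        ++ (let ns := n0 :: rest.map Prod.snd
            ns.dropLast.dropLast.flatMap (fun nj => List.replicate (nj - 1) 2 ++ [1])
              ++ List.replicate (ns.dropLast.getLastD 0 - 1 + ns.getLastD 0) 2)

def Gamma (w : List ℕ) : List ℕ := gammaBlocks (blocks w)

/-- The involution `φ` on binary words. -/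
def phi (w : List ℕ) : List ℕ :=
  let bs := blocks w
  let ns := bs.map Prod.snd
  let newms : List ℕ :=
    match (bs.map Prod.fst).reverse with
    | [] => []
    | [a] => [a]
    | a :: rest => (a - 1) :: (rest.dropLast ++ [rest.getLastD 0 + 1])
  blockWord (newms.zip ns)

/-- Fibonacci words: binary words with no two consecutive ones. -/
def IsFib (w : List ℕ) : Prop :=
  IsBinary w ∧ w.Chain' fun a b => ¬(a = 1 ∧ b = 1)

def FibSet (n : ℕ) : Set (List ℕ) := {w | IsFib w ∧ w.length = n}

/-- Fibonacci words of length `n` ending with the letter 1. -/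
def FibSet' (n : ℕ) : Set (List ℕ) :=
  {w | IsFib w ∧ w.length = n ∧ w.getLast? = some 1}

/-- Binary words of length `n` with no two consecutive twos. -/
def GSet (n : ℕ) : Set (List ℕ) :=
  {w | IsBinary w ∧ w.length = n ∧ w.Chain' fun a b => ¬(a = 2 ∧ b = 2)}

/-- The word `1^{m₀} 2^{d+n₀-1} 1 2^{n₁-1} ⋯ 1 2^{n_{d-1}-1} 1 2^{n_d}`. -/
def Rword (m0 : ℕ) (ns : List ℕ) : List ℕ :=
  match ns with
  | [] => List.replicate m0 1
  | [n0] => List.replicate m0 1 ++ List.replicate n0 2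
  | n0 :: rest =>
      List.replicate m0 1 ++ List.replicate (rest.length + n0 - 1) 2
        ++ rest.dropLast.flatMap (fun nj => 1 :: List.replicate (nj - 1) 2)
        ++ (1 :: List.replicate (rest.getLastD 0) 2)

def RSet (n : ℕ) : Set (List ℕ) :=
  {w | ∃ m0 ns, m0 ≤ 1 ∧ ns ≠ [] ∧ (∀ j ∈ List.dropLast ns, 1 ≤ j) ∧
        w = Rword m0 ns ∧ w.length = n}

/-- The Fibonacci word `1^{m₀} 2^{n₀} 1 2^{n₁} ⋯ 1 2^{n_d}`. -/
def Fword (m0 : ℕ) (ns : List ℕ) : List ℕ :=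
  List.replicate m0 1 ++ List.replicate (ns.headD 0) 2
    ++ ns.tail.flatMap fun nj => 1 :: List.replicate nj 2

section Aux

private lemma leadCount_eq (a : ℕ) : ∀ w : List ℕ,
    w = List.replicate (leadCount a w).1 a ++ (leadCount a w).2
  | [] => rfl
  | b :: rest => by
    by_cases h : b = a
    · subst h
      simp only [leadCount, if_pos rfl, List.replicate_succ, List.cons_append]
      exact congrArg (b :: ·) (leadCount_eq b rest)
    · simp [leadCount, h]

private lemma leadCount_head_ne (a : ℕ) : ∀ w : List ℕ,
    (leadCount a w).2.head? ≠ some a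
  | [] => by simp [leadCount]
  | b :: rest => by
    by_cases h : b = a
    · subst h
      simpa only [leadCount, if_pos rfl, if_true] using leadCount_head_ne b rest
    · simp [leadCount, h]

private lemma leadCount_of_head_ne {a : ℕ} {w : List ℕ} (h : w.head? ≠ some a) :
    leadCount a w = (0, w) := by
  cases w with
  | nil => rfl
  | cons b rest =>
    have hb : b ≠ a := by simpa using h
    simp [leadCount, hb]

private lemma leadCount_fst_pos {a : ℕ} {w : List ℕ} (h : w.head? = some a) :
    1 ≤ (leadCount a w).1 := by
  cases w with
  | nil => simp at h
  | cons b rest =>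
    have hb : b = a := by simpa using h
    simp [leadCount, hb]

private lemma chain'_leadCount_le {w : List ℕ}
    (h : w.Chain' fun a b => ¬(a = 2 ∧ b = 2)) : (leadCount 2 w).1 ≤ 1 := by
  cases w with
  | nil => simp [leadCount]
  | cons b rest =>
    by_cases hb : b = 2
    · subst hb
      have hrest : rest.head? ≠ some 2 := by
        cases rest with
        | nil => simp
        | cons c l =>
          rcases List.isChain_cons_cons.1 h with ⟨h1, _⟩
          simp only [List.head?_cons, ne_eq, Option.some.injEq]
          intro hc; exact h1 ⟨rfl, hc⟩
      simp [leadCount, leadCount_of_head_ne hrest]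
    · simp [leadCount, hb]

private lemma isBinary_suffix {w v : List ℕ} (h : IsBinary w) (hs : v <:+ w) :
    IsBinary v := fun a ha => h a (hs.subset ha)

private lemma blocks_nil : blocks [] = [] := rfl

private lemma blocksAux_congr : ∀ f1 : ℕ, ∀ f2 : ℕ, ∀ w : List ℕ, IsBinary w →
    w.length ≤ f1 → w.length ≤ f2 → blocksAux f1 w = blocksAux f2 w
  | 0, f2, w, _, h1, _ => by
    have : w = [] := List.length_eq_zero_iff.1 (Nat.le_zero.1 h1)
    subst this; cases f2 <;> rfl
  | f1 + 1, f2, w, hb, h1, h2 => by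
    cases w with
    | nil => cases f2 <;> rfl
    | cons b rest =>
      obtain ⟨f2', rfl⟩ : ∃ k, f2 = k + 1 := by
        cases f2 with
        | zero => simp at h2
        | succ k => exact ⟨k, rfl⟩
      show (_, _) :: blocksAux f1 _ = (_, _) :: blocksAux f2' _
      set w := b :: rest with hw
      set p := leadCount 1 w with hp
      set q := leadCount 2 p.2 with hq
      have hwlen : w = List.replicate p.1 1 ++ p.2 := leadCount_eq 1 w
      have hplen : p.2 = List.replicate q.1 2 ++ q.2 := leadCount_eq 2 p.2
      have hsum : w.length = p.1 + q.1 + q.2.length := by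
        rw [hwlen] at *; rw [hplen]; simp; omega
      have hpos : 1 ≤ p.1 + q.1 := by
        rcases hb b (by simp [hw]) with h1' | h2'
        · have : 1 ≤ p.1 := leadCount_fst_pos (by simp [hp, hw, h1'])
          omega
        · by_cases hp1 : 1 ≤ p.1
          · omega
          · have hp0 : p.1 = 0 := by omega
            have : p.2 = w := by
              rw [hwlen]; rw [hp0]; simp
            have : 1 ≤ q.1 := leadCount_fst_pos (by rw [this]; simp [hw, h2'])
            omega
      have hq2 : IsBinary q.2 := by
        apply isBinary_suffix hb
        rw [hwlen, hplen]
        exact (List.suffix_append _ _).trans (List.suffix_append _ _)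
      have hle : q.2.length ≤ f1 := by
        have := h1; rw [hsum] at this; omega
      have hle2 : q.2.length ≤ f2' := by
        have := h2; rw [hsum] at this; omega
      rw [blocksAux_congr f1 f2' q.2 hq2 hle hle2]

private lemma blocks_cons {w : List ℕ} (hb : IsBinary w) (hw : w ≠ []) :
    blocks w = ((leadCount 1 w).1, (leadCount 2 (leadCount 1 w).2).1)
      :: blocks (leadCount 2 (leadCount 1 w).2).2 := by
  obtain ⟨b, rest, rfl⟩ := List.exists_cons_of_ne_nil hw
  set w := b :: rest with hwdef
  set p := leadCount 1 w with hp
  set q := leadCount 2 p.2 with hq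
  have hwlen : w = List.replicate p.1 1 ++ p.2 := leadCount_eq 1 w
  have hplen : p.2 = List.replicate q.1 2 ++ q.2 := leadCount_eq 2 p.2
  have hsum : w.length = p.1 + q.1 + q.2.length := by
    rw [hwlen] at *; rw [hplen]; simp; omega
  have hpos : 1 ≤ p.1 + q.1 := by
    rcases hb b (by simp [hwdef]) with h1' | h2'
    · have : 1 ≤ p.1 := leadCount_fst_pos (by simp [hp, hwdef, h1'])
      omega
    · by_cases hp1 : 1 ≤ p.1
      · omega
      · have hp0 : p.1 = 0 := by omega
        have hpw : p.2 = w := by rw [hwlen]; rw [hp0]; simp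
        have : 1 ≤ q.1 := leadCount_fst_pos (by rw [hpw]; simp [hwdef, h2'])
        omega
  have hq2 : IsBinary q.2 := by
    apply isBinary_suffix hb
    rw [hwlen, hplen]
    exact (List.suffix_append _ _).trans (List.suffix_append _ _)
  show blocksAux w.length w = _
  have hlen : w.length = rest.length + 1 := by simp [hwdef]
  rw [hlen]
  show (p.1, q.1) :: blocksAux rest.length q.2 = _
  congr 1
  apply blocksAux_congr _ _ _ hq2 (by omega) le_rfl

private lemma blocks_spec (w : List ℕ) (hb : IsBinary w)
    (hc : w.Chain' fun a b => ¬(a = 2 ∧ b = 2)) :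
    (∀ p ∈ (blocks w).tail, 1 ≤ p.1) ∧ (∀ p ∈ (blocks w).dropLast, p.2 = 1) := by
  by_cases hw : w = []
  · subst hw; simp [blocks_nil]
  · set p := leadCount 1 w with hp
    set q := leadCount 2 p.2 with hq
    have key := blocks_cons hb hw
    have hwlen : w = List.replicate p.1 1 ++ p.2 := leadCount_eq 1 w
    have hplen : p.2 = List.replicate q.1 2 ++ q.2 := leadCount_eq 2 p.2
    have hp2suf : p.2 <:+ w := by rw [hwlen]; exact List.suffix_append _ _
    have hq2suf : q.2 <:+ w := by
      rw [hwlen, hplen]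
      exact (List.suffix_append _ _).trans (List.suffix_append _ _)
    have hq2bin : IsBinary q.2 := isBinary_suffix hb hq2suf
    have hq2chain : q.2.Chain' fun a b => ¬(a = 2 ∧ b = 2) := hc.suffix hq2suf
    have hsum : w.length = p.1 + q.1 + q.2.length := by
      rw [hwlen] at *; rw [hplen]; simp; omega
    have hpos : 1 ≤ p.1 + q.1 := by
      obtain ⟨b, rest, hbr⟩ := List.exists_cons_of_ne_nil hw
      rcases hb b (by simp [hbr]) with h1' | h2'
      · have : 1 ≤ p.1 := leadCount_fst_pos (by simp [hp, hbr, h1'])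
        omega
      · by_cases hp1 : 1 ≤ p.1
        · omega
        · have hp0 : p.1 = 0 := by omega
          have hpw : p.2 = w := by rw [hwlen]; rw [hp0]; simp
          have : 1 ≤ q.1 := leadCount_fst_pos (by rw [hpw]; simp [hbr, h2'])
          omega
    have hlt : q.2.length < w.length := by
      have : w.length ≠ 0 := by simpa using hw
      omega
    have IH := blocks_spec q.2 hq2bin hq2chain
    by_cases hq2 : q.2 = []
    · rw [key, hq2, blocks_nil]
      simp
    · -- q.2 starts with 1
      obtain ⟨c, ctl, hcc⟩ := List.exists_cons_of_ne_nil hq2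
      have hc2 : c ≠ 2 := by
        have := leadCount_head_ne 2 p.2
        rw [← hq, hcc] at this; simpa using this
      have hc1 : c = 1 := by
        rcases hq2bin c (by simp [hcc]) with h | h
        · exact h
        · exact absurd h hc2
      have hkey2 := blocks_cons hq2bin hq2
      have hm' : 1 ≤ (leadCount 1 q.2).1 :=
        leadCount_fst_pos (by rw [hcc, hc1]; rfl)
      -- q.1 = 1
      have hq1le : q.1 ≤ 1 := chain'_leadCount_le (hc.suffix hp2suf)
      have hq1ge : 1 ≤ q.1 := by
        have hp2ne : p.2 ≠ [] := by
          intro h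
          have hl := congrArg List.length hplen
          rw [h] at hl
          simp at hl
          exact hq2 (List.length_eq_zero_iff.1 (by omega))
        obtain ⟨d, dtl, hdd⟩ := List.exists_cons_of_ne_nil hp2ne
        have hd1 : d ≠ 1 := by
          have := leadCount_head_ne 1 w
          rw [← hp, hdd] at this; simpa using this
        have hd2 : d = 2 := by
          rcases isBinary_suffix hb hp2suf d (by simp [hdd]) with h | h
          · exact absurd h hd1
          · exact h
        exact leadCount_fst_pos (by rw [hdd, hd2]; rfl)
      have hq1 : q.1 = 1 := le_antisymm hq1le hq1ge
      constructor
      · intro x hx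
        rw [key] at hx
        simp only [List.tail_cons] at hx
        rw [hkey2] at hx
        rcases List.mem_cons.1 hx with h | h
        · subst h; exact hm'
        · exact IH.1 x (by rw [hkey2]; simpa using h)
      · intro x hx
        rw [key] at hx
        have hne : blocks q.2 ≠ [] := by rw [hkey2]; simp
        rw [List.dropLast_cons_of_ne_nil hne] at hx
        rcases List.mem_cons.1 hx with h | h
        · subst h; exact hq1
        · exact IH.2 x h
termination_by w.length
decreasing_by exact hlt

private lemma flatMap_snd_ones {l : List (ℕ × ℕ)} (h : ∀ p ∈ l, p.2 = 1) :
    (l.flatMap fun p => List.replicate (p.2 - 1) 2 ++ [1]) = List.replicate l.length 1 := by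
  induction l with
  | nil => simp
  | cons a t ih =>
    have ha := h a (by simp)
    rw [List.flatMap_cons, ha, ih fun p hp => h p (by simp [hp])]
    simp [List.replicate_succ]

private lemma flatMap_ones {l : List ℕ} (h : ∀ x ∈ l, x = 1) :
    (l.flatMap fun nj => List.replicate (nj - 1) 2 ++ [1]) = List.replicate l.length 1 := by
  induction l with
  | nil => simp
  | cons a t ih =>
    have ha := h a (by simp)
    rw [List.flatMap_cons, ha, ih fun x hx => h x (by simp [hx])]
    simp [List.replicate_succ]

private lemma getLastD_ones : ∀ (l : List ℕ) (d : ℕ), (∀ x ∈ l, x = 1) → l ≠ [] →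
    l.getLastD d = 1
  | [x], _, h, _ => h x (by simp)
  | x :: y :: t, d, h, _ => by
    have := getLastD_ones (y :: t) x (fun z hz => h z (by simp at hz ⊢; tauto)) (by simp)
    simpa [List.getLastD] using this

private lemma psi_eq_gamma_blocks : ∀ bs : List (ℕ × ℕ),
    (∀ p ∈ bs.tail, 1 ≤ p.1) → (∀ p ∈ bs.dropLast, p.2 = 1) →
    psiBlocks bs = gammaBlocks bs
  | [], _, _ => rfl
  | [(m0, n0)], _, _ => by simp [psiBlocks, gammaBlocks]
  | (m0, n0) :: r1 :: rtl, h1, h2 => by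
    have hgb : gammaBlocks ((m0, n0) :: r1 :: rtl) =
        List.replicate m0 1
          ++ (r1 :: rtl).dropLast.flatMap (fun p => 2 :: List.replicate (p.1 - 1) 1)
          ++ (2 :: List.replicate ((r1 :: rtl).getLastD (0,0)).1 1)
          ++ ((n0 :: (r1 :: rtl).map Prod.snd).dropLast.dropLast.flatMap
                (fun nj => List.replicate (nj - 1) 2 ++ [1])
              ++ List.replicate ((n0 :: (r1 :: rtl).map Prod.snd).dropLast.getLastD 0 - 1
                  + (n0 :: (r1 :: rtl).map Prod.snd).getLastD 0) 2) := rfl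
    rw [hgb]
    rcases (r1 :: rtl).eq_nil_or_concat with h | ⟨rs, a, hra⟩
    · simp at h
    rw [List.concat_eq_append] at hra
    rw [hra] at h1 h2 ⊢
    have hdl : ((m0, n0) :: (rs ++ [a])).dropLast = (m0, n0) :: rs := by
      rw [List.dropLast_cons_of_ne_nil (by simp)]; simp
    rw [hdl] at h2
    have hn0 : n0 = 1 := h2 (m0, n0) (by simp)
    have hrs : ∀ p ∈ rs, p.2 = 1 := fun p hp => h2 p (by simp [hp])
    have ha1 : 1 ≤ a.1 := h1 a (by simp)
    obtain ⟨k, hk⟩ : ∃ k, a.1 = k + 1 := ⟨a.1 - 1, by omega⟩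
    have hmap : ∀ x ∈ (n0 :: rs.map Prod.snd), x = 1 := by
      intro x hx
      rcases List.mem_cons.1 hx with h | h
      · rw [h, hn0]
      · obtain ⟨p, hp, rfl⟩ := List.mem_map.1 h; exact hrs p hp
    have hns0 : (n0 :: (rs ++ [a]).map Prod.snd) = (n0 :: rs.map Prod.snd) ++ [a.2] := by
      simp
    rw [hns0]
    simp only [List.dropLast_concat, List.getLastD_concat]
    have hgl : (n0 :: rs.map Prod.snd).getLastD 0 = 1 :=
      getLastD_ones _ 0 hmap (by simp)
    rw [hgl, flatMap_ones (fun x hx => hmap x (List.dropLast_subset _ hx))]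
    -- psi side
    unfold psiBlocks
    simp only [List.headD_cons, List.tail_cons, hdl, List.getLastD_concat,
      List.flatMap_append, List.flatMap_cons, List.flatMap_nil,
      List.dropLast_concat]
    rw [flatMap_snd_ones hrs, hn0]
    simp only [List.length_dropLast, List.length_cons, List.length_map,
      Nat.add_sub_cancel, hk]
    simp [List.replicate_succ, List.append_assoc, ← List.replicate_add]
    rw [show ((m0, 1) :: (rs ++ [a])).getLast? = some a by
      rw [← List.cons_append, List.getLast?_concat]]
    show List.replicate k 1 ++ 1 :: (List.replicate rs.length 1 ++ List.replicate a.2 2)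
        = 1 :: (List.replicate k 1 ++ (List.replicate rs.length 1 ++ List.replicate a.2 2))
    clear hk
    induction k with
    | zero => simp
    | succ j ih => simpa [List.replicate_succ] using ih

end Aux

theorem stmt_14 (n : ℕ) :
    (∀ w ∈ GSet n, Psi w = Gamma w) ∧ Psi '' GSet n = Gamma '' GSet n := by
  have h : ∀ w ∈ GSet n, Psi w = Gamma w := by
    rintro w ⟨hb, hlen, hc⟩
    have hs := blocks_spec w hb hc
    exact psi_eq_gamma_blocks _ hs.1 hs.2
  exact ⟨h, Set.image_congr h⟩
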